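/- Let R > 0 and H > 0, and let (m_k) and (n_k) be sequences of positive integers with n_k → ∞ and m_k/n_k² → s for some s ≥ 0. Then the Schwarz lantern areas A_k = 2·n_k·R·sin(π/n_k)·√(H² + m_k²·R²·(1 − cos(π/n_k))²) converge to 2πR·√(H² + s²·π⁴·R²/4) as k → ∞. -/

import Mathlib

open Filter Real

private lemma sinc_limit : Tendsto (fun y : ℝ => Real.sin y / y) (nhdsWithin 0 {(0:ℝ)}ᶜ) (nhds 1) := by
  have h := (Real.hasDerivAt_sin 0)
  rw [hasDerivAt_iff_tendsto_slope] at h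
  have h2 : Tendsto (fun y : ℝ => Real.sin y / y) (nhdsWithin 0 {(0:ℝ)}ᶜ) (nhds (Real.cos 0)) := by
    refine h.congr fun y => ?_
    simp [slope_def_field]
  simpa using h2

private lemma cosc_limit : Tendsto (fun y : ℝ => (1 - Real.cos y) / y ^ 2)
    (nhdsWithin 0 {(0:ℝ)}ᶜ) (nhds (1/2)) := by
  have hhalf : Tendsto (fun y : ℝ => y / 2) (nhdsWithin 0 {(0:ℝ)}ᶜ) (nhdsWithin 0 {(0:ℝ)}ᶜ) := by
    apply tendsto_nhdsWithin_of_tendsto_nhds_of_eventually_within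
    · have h0 : Tendsto (fun y : ℝ => y / 2) (nhds (0:ℝ)) (nhds ((0:ℝ)/2)) :=
        (tendsto_id (α := ℝ)).div_const 2
      simpa using h0.mono_left nhdsWithin_le_nhds
    · filter_upwards [self_mem_nhdsWithin] with y hy
      simp only [Set.mem_compl_iff, Set.mem_singleton_iff] at hy ⊢
      intro h; exact hy (by linarith)
  have h1 : Tendsto (fun y : ℝ => Real.sin (y/2) / (y/2)) (nhdsWithin 0 {(0:ℝ)}ᶜ) (nhds 1) :=
    sinc_limit.comp hhalf
  have h2 : Tendsto (fun y : ℝ => (1/2) * (Real.sin (y/2) / (y/2)) ^ 2)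
      (nhdsWithin 0 {(0:ℝ)}ᶜ) (nhds (1/2)) := by
    have := ((h1.pow 2).const_mul (1/2 : ℝ))
    simpa using this
  refine h2.congr' ?_
  filter_upwards [self_mem_nhdsWithin] with y hy
  simp only [Set.mem_compl_iff, Set.mem_singleton_iff] at hy
  have hsq : Real.sin (y/2) ^ 2 = 1/2 - Real.cos y / 2 := by
    have := Real.sin_sq_eq_half_sub (y/2)
    rwa [mul_div_cancel₀ y (two_ne_zero)] at this
  field_simp
  nlinarith [hsq]

/-- Convergence of the Schwarz lantern area: if `n_k → ∞` and `m_k / n_k² → s ≥ 0`, then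
the lantern areas `2 n_k R sin(π/n_k) √(H² + m_k² R² (1 - cos(π/n_k))²)` converge to
`2πR √(H² + s² π⁴ R² / 4)`. -/
theorem schwarz_lantern_area_limit
    (R H : ℝ) (hR : 0 < R) (hH : 0 < H)
    (m n : ℕ → ℕ) (hm : ∀ k, 0 < m k) (hn : ∀ k, 0 < n k)
    (s : ℝ) (hs : 0 ≤ s)
    (hntop : Tendsto (fun k => (n k : ℝ)) atTop atTop)
    (hmn : Tendsto (fun k => (m k : ℝ) / (n k : ℝ) ^ 2) atTop (nhds s)) :
    Tendsto
      (fun k => 2 * (n k : ℝ) * R * Real.sin (π / (n k : ℝ)) *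
        Real.sqrt (H ^ 2 + (m k : ℝ) ^ 2 * R ^ 2 * (1 - Real.cos (π / (n k : ℝ))) ^ 2))
      atTop
      (nhds (2 * π * R * Real.sqrt (H ^ 2 + s ^ 2 * π ^ 4 * R ^ 2 / 4))) := by
  set x : ℕ → ℝ := fun k => π / (n k : ℝ) with hxdef
  have hnpos : ∀ k, (0:ℝ) < (n k : ℝ) := fun k => by exact_mod_cast hn k
  have hxpos : ∀ k, 0 < x k := fun k => div_pos Real.pi_pos (hnpos k)
  have hx0 : Tendsto x atTop (nhdsWithin 0 {(0:ℝ)}ᶜ) := by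
    apply tendsto_nhdsWithin_of_tendsto_nhds_of_eventually_within
    · exact tendsto_const_nhds.div_atTop hntop
    · filter_upwards with k
      simp only [Set.mem_compl_iff, Set.mem_singleton_iff]
      exact (hxpos k).ne'
  -- n sin(π/n) → π
  have hA : Tendsto (fun k => (n k : ℝ) * Real.sin (x k)) atTop (nhds π) := by
    have h1 : Tendsto (fun k => π * (Real.sin (x k) / x k)) atTop (nhds (π * 1)) :=
      (sinc_limit.comp hx0).const_mul π
    rw [mul_one] at h1
    refine h1.congr fun k => ?_
    have : x k ≠ 0 := (hxpos k).ne'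
    field_simp [hxdef]
    rw [mul_assoc, show x k * (n k : ℝ) = π by rw [hxdef]; field_simp [(hnpos k).ne']]
    ring
  -- m (1 - cos(π/n)) → s π² / 2
  have hB : Tendsto (fun k => (m k : ℝ) * (1 - Real.cos (x k))) atTop
      (nhds (s * π ^ 2 * (1/2))) := by
    have h1 : Tendsto (fun k => ((m k : ℝ) / (n k : ℝ) ^ 2) * π ^ 2 *
        ((1 - Real.cos (x k)) / (x k) ^ 2)) atTop (nhds (s * π ^ 2 * (1/2))) :=
      ((hmn.mul_const (π ^ 2)).mul (cosc_limit.comp hx0))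
    refine h1.congr fun k => ?_
    have hxne : x k ≠ 0 := (hxpos k).ne'
    have hnne : (n k : ℝ) ≠ 0 := (hnpos k).ne'
    have hxsq : (x k) ^ 2 = π ^ 2 / (n k : ℝ) ^ 2 := by rw [hxdef]; ring
    rw [hxsq]
    field_simp
  have hmain : Tendsto
      (fun k => 2 * R * ((n k : ℝ) * Real.sin (x k)) *
        Real.sqrt (H ^ 2 + R ^ 2 * ((m k : ℝ) * (1 - Real.cos (x k))) ^ 2))
      atTop
      (nhds (2 * R * π * Real.sqrt (H ^ 2 + R ^ 2 * (s * π ^ 2 * (1/2)) ^ 2))) := by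
    exact (hA.const_mul (2 * R)).mul
      ((((hB.pow 2).const_mul (R ^ 2)).const_add (H ^ 2)).sqrt)
  have heq : (2 * R * π * Real.sqrt (H ^ 2 + R ^ 2 * (s * π ^ 2 * (1/2)) ^ 2))
      = 2 * π * R * Real.sqrt (H ^ 2 + s ^ 2 * π ^ 4 * R ^ 2 / 4) := by
    rw [show H ^ 2 + R ^ 2 * (s * π ^ 2 * (1/2)) ^ 2
      = H ^ 2 + s ^ 2 * π ^ 4 * R ^ 2 / 4 by ring]
    ring
  rw [← heq]
  refine hmain.congr fun k => ?_
  rw [show H ^ 2 + R ^ 2 * ((m k : ℝ) * (1 - Real.cos (x k))) ^ 2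
    = H ^ 2 + (m k : ℝ) ^ 2 * R ^ 2 * (1 - Real.cos (x k)) ^ 2 by ring]
  ring
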